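/- Let s be a spin configuration on a finite simple graph G. Then the sum of the unnormalized joint vertex–edge weights over all edge configurations equals e^{−β|E(G)|} times the unnormalized Gibbs weight: Σ_{w : E(G)→{0,1}} W_VE(s,w) = e^{−β·|E(G)|} · W_V(s). -/

import Mathlib

open Classical

noncomputable section

variable {V : Type*} [Fintype V] [DecidableEq V]

/-- Product `s i * s j` of spins over an unordered edge `{i, j}`. -/
def pairProd (s : V → ℝ) : Sym2 V → ℝ :=
  Sym2.lift ⟨fun i j => s i * s j, fun _ _ => mul_comm _ _⟩

/-- Unnormalized Gibbs weight
`W_V(s) = exp (β Σ_{{i,j} ∈ E} s_i s_j + β Σ_i h_i s_i)`. -/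
def WV (G : SimpleGraph V) [DecidableRel G.Adj] (β : ℝ) (h : V → ℝ) (s : V → ℝ) : ℝ :=
  Real.exp (β * ∑ e ∈ G.edgeFinset, pairProd s e + β * ∑ i : V, h i * s i)

/-- Edge factor of the joint vertex-edge weight:
`(1 - e^{-2β})` if `w_{ij} = 1` and `s_i = s_j`, `e^{-2β}` if `w_{ij} = 0`, else `0`. -/
def edgeFactorVE (β : ℝ) (s : V → ℝ) (b : Bool) : Sym2 V → ℝ :=
  Sym2.lift ⟨fun i j =>
    if b then (if s i = s j then 1 - Real.exp (-2 * β) else 0) else Real.exp (-2 * β),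
    by intro i j; by_cases hb : b <;> simp [hb, eq_comm]⟩

/-- Unnormalized joint vertex-edge weight `W_VE(s, w)`. -/
def WVE (G : SimpleGraph V) [DecidableRel G.Adj] (β : ℝ) (h : V → ℝ) (s : V → ℝ)
    (w : G.edgeSet → Bool) : ℝ :=
  (∏ e : G.edgeSet, edgeFactorVE β s (w e) e.val) * Real.exp (β * ∑ i : V, h i * s i)

/-- Edge factor of the Swendsen-Wang edge-step probability: if `s_i = s_j` then
`(1 - e^{-2β})` for `w_{ij} = 1` and `e^{-2β}` for `w_{ij} = 0`; otherwise `0` for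
`w_{ij} = 1` and `1` for `w_{ij} = 0`. -/
def edgeFactorP (β : ℝ) (s : V → ℝ) (b : Bool) : Sym2 V → ℝ :=
  Sym2.lift ⟨fun i j =>
    if s i = s j then (if b then 1 - Real.exp (-2 * β) else Real.exp (-2 * β))
    else (if b then 0 else 1),
    by intro i j; simp [eq_comm]⟩

/-- Swendsen-Wang edge-step probability `P(s, w)`. -/
def swP (G : SimpleGraph V) [DecidableRel G.Adj] (β : ℝ) (s : V → ℝ)
    (w : G.edgeSet → Bool) : ℝ :=
  ∏ e : G.edgeSet, edgeFactorP β s (w e) e.val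

/-- Spanning subgraph of `G` whose edges are the edges `e` with `w e = 1`. -/
def openSubgraph (G : SimpleGraph V) [DecidableRel G.Adj] (w : G.edgeSet → Bool) :
    SimpleGraph V where
  Adj i j := ∃ hij : G.Adj i j, w ⟨s(i, j), G.mem_edgeSet.mpr hij⟩ = true
  symm := by
    refine ⟨?_⟩
    rintro i j ⟨hij, hw⟩
    refine ⟨hij.symm, ?_⟩
    have he : (⟨s(j, i), G.mem_edgeSet.mpr hij.symm⟩ : G.edgeSet)
        = ⟨s(i, j), G.mem_edgeSet.mpr hij⟩ := Subtype.ext (Sym2.eq_swap)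
    rw [he]; exact hw
  loopless := by refine ⟨?_⟩; rintro i ⟨hij, -⟩; exact G.irrefl hij

/-- `h_γ = Σ_{i ∈ γ} h_i`: sum of the field over a connected component `γ ∈ C_w`. -/
def hComp (G : SimpleGraph V) [DecidableRel G.Adj] (h : V → ℝ) (w : G.edgeSet → Bool)
    (γ : (openSubgraph G w).ConnectedComponent) : ℝ :=
  ∑ i ∈ Finset.univ.filter (fun i => (openSubgraph G w).connectedComponentMk i = γ), h i

/-- A configuration is compatible with the edge configuration `w` if it is constant on each
connected component of the subgraph of open edges. -/
def Compatible (G : SimpleGraph V) [DecidableRel G.Adj] (w : G.edgeSet → Bool)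
    (t : V → ℝ) : Prop :=
  ∀ i j : V, (openSubgraph G w).connectedComponentMk i = (openSubgraph G w).connectedComponentMk j
    → t i = t j

/-- Swendsen-Wang spin-step probability `Q(w, t)`: for `t` compatible with `w`, the product
over components `γ ∈ C_w` of `e^{β h_γ τ_γ} / (e^{β h_γ} + e^{-β h_γ})`, where
`τ_γ = t γ.out` is the common value of `t` on `γ`; and `0` for incompatible `t`. -/
def swQ (G : SimpleGraph V) [DecidableRel G.Adj] (β : ℝ) (h : V → ℝ) (w : G.edgeSet → Bool)
    (t : V → ℝ) : ℝ :=
  if Compatible G w t then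
    ∏ γ : (openSubgraph G w).ConnectedComponent,
      Real.exp (β * hComp G h w γ * t γ.out) /
        (Real.exp (β * hComp G h w γ) + Real.exp (-(β * hComp G h w γ)))
  else 0

/-- Unnormalized edge weight
`W_E(w) = Π_{w_e = 1} (1 - e^{-2β}) · Π_{w_e = 0} e^{-2β} · Π_{γ ∈ C_w} (e^{β h_γ} + e^{-β h_γ})`. -/
def WE (G : SimpleGraph V) [DecidableRel G.Adj] (β : ℝ) (h : V → ℝ)
    (w : G.edgeSet → Bool) : ℝ :=
  (∏ _e ∈ Finset.univ.filter (fun e : G.edgeSet => w e = true), (1 - Real.exp (-2 * β))) *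
  (∏ _e ∈ Finset.univ.filter (fun e : G.edgeSet => w e = false), Real.exp (-2 * β)) *
  ∏ γ : (openSubgraph G w).ConnectedComponent,
    (Real.exp (β * hComp G h w γ) + Real.exp (-(β * hComp G h w γ)))

/-- For any spin configuration `s`, summing the unnormalized joint vertex-edge
weights over all edge configurations gives `e^{-β |E(G)|}` times the unnormalized Gibbs
weight: `Σ_w W_VE(s, w) = e^{-β |E(G)|} · W_V(s)`. -/
theorem sum_WVE_over_edgeConfigs (G : SimpleGraph V) [DecidableRel G.Adj]
    (β : ℝ) (hβ : 0 < β) (h : V → ℝ)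
    (s : V → ℝ) (hs : ∀ i, s i = 1 ∨ s i = -1) :
    ∑ w : G.edgeSet → Bool, WVE G β h s w
      = Real.exp (-β * G.edgeFinset.card) * WV G β h s := by
  have key : ∀ e ∈ G.edgeFinset, (∑ b : Bool, edgeFactorVE β s b e)
      = Real.exp (β * (pairProd s e - 1)) := by
    intro e he
    induction e using Sym2.inductionOn with
    | hf i j =>
      simp only [edgeFactorVE, pairProd, Sym2.lift_mk, Fintype.sum_bool, if_true, if_false]
      by_cases hij : s i = s j
      · have h1 : s j * s j = 1 := by
          rcases hs j with h1 | h1 <;> rw [h1] <;> norm_num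
        simp [hij, h1]
      · have h1 : s i * s j = -1 := by
          rcases hs i with h1 | h1 <;> rcases hs j with h2 | h2 <;>
            first
              | (exfalso; exact hij (h1.trans h2.symm))
              | (rw [h1, h2]; norm_num)
        rw [h1]
        simp [hij]
        ring_nf
  unfold WVE
  rw [← Finset.sum_mul]
  have step1 : (∑ w : G.edgeSet → Bool, ∏ e : G.edgeSet, edgeFactorVE β s (w e) e.val)
      = ∏ e : G.edgeSet, ∑ b : Bool, edgeFactorVE β s b e.val := by
    rw [Fintype.prod_sum]
  rw [step1]
  have step2 : (∏ e : G.edgeSet, ∑ b : Bool, edgeFactorVE β s b e.val)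
      = ∏ e ∈ G.edgeFinset, ∑ b : Bool, edgeFactorVE β s b e :=
    Finset.prod_set_coe (f := fun e => ∑ b : Bool, edgeFactorVE β s b e) _
  rw [step2, Finset.prod_congr rfl key]
  rw [← Real.exp_sum]
  unfold WV
  rw [← Real.exp_add, ← Real.exp_add]
  congr 1
  simp only [mul_sub, mul_one, Finset.sum_sub_distrib, Finset.sum_const, nsmul_eq_mul,
    ← Finset.mul_sum]
  push_cast
  ring

end
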